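/- For all nonnegative integers n and k, the coefficient y_3(n,k;λ;a,b) defined by (e^{bkt}/k!)(λe^{(a-b)t}+1)^k = Σ_{n≥0} y_3(n,k;λ;a,b) t^n/n! satisfies y_3(n,k;λ;a,b) = (1/k!) Σ_{j=0}^{k} C(k,j) λ^j (bk + j(a-b))^n. -/

import Mathlib

open scoped Nat

lemma cexp_hasSum (x : ℂ) : HasSum (fun n : ℕ => x ^ n / n.factorial) (Complex.exp x) := by
  rw [Complex.exp_eq_exp_ℂ]
  exact NormedSpace.expSeries_div_hasSum_exp x

lemma coeff_zero (c : ℕ → ℂ)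
    (h : ∀ t : ℂ, HasSum (fun n => c n * t ^ n / n.factorial) 0) :
    ∀ n, c n = 0 := by
  set p : FormalMultilinearSeries ℂ ℂ ℂ :=
    fun n => ContinuousMultilinearMap.mkPiRing ℂ (Fin n) (c n / n.factorial) with hp
  have papp : ∀ (n : ℕ) (t : ℂ), (p n fun _ => t) = c n * t ^ n / n.factorial := by
    intro n t
    simp [hp, ContinuousMultilinearMap.mkPiRing_apply, smul_eq_mul]
    ring_nf
  -- bound on norms, at t = 2
  obtain ⟨C, hC⟩ : ∃ C, ∀ n : ℕ, ‖c n * 2 ^ n / n.factorial‖ ≤ C := by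
    have := ((h 2).summable.tendsto_atTop_zero).norm
    simp only [norm_zero] at this
    obtain ⟨C, hC⟩ := this.bddAbove_range
    exact ⟨C, fun n => hC ⟨n, rfl⟩⟩
  have hradius : 1 ≤ p.radius := by
    apply p.le_radius_of_bound C
    intro n
    have hnorm : ‖p n‖ = ‖c n / n.factorial‖ := ContinuousMultilinearMap.norm_mkPiRing _
    have h2 : ‖c n * 2 ^ n / n.factorial‖ = ‖c n / n.factorial‖ * 2 ^ n := by
      rw [mul_div_right_comm, norm_mul]
      simp [abs_of_nonneg]
    have h1 : (1 : ℝ) ≤ 2 ^ n := one_le_pow₀ (by norm_num)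
    have hge : ‖c n / n.factorial‖ ≤ ‖c n / n.factorial‖ * 2 ^ n :=
      le_mul_of_one_le_right (norm_nonneg _) h1
    calc ‖p n‖ * (1 : ℝ) ^ n = ‖c n / n.factorial‖ := by rw [hnorm]; simp
      _ ≤ ‖c n / n.factorial‖ * 2 ^ n := hge
      _ = ‖c n * 2 ^ n / n.factorial‖ := h2.symm
      _ ≤ C := hC n
  have hfp : HasFPowerSeriesAt (0 : ℂ → ℂ) p 0 := by
    refine ⟨1, ?_⟩
    refine ⟨hradius, one_pos, ?_⟩
    intro t _
    simp only [Pi.zero_apply]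
    exact (h t).congr_fun fun n => papp n t
  intro n
  have := hfp.apply_eq_zero n 1
  rw [papp n 1] at this
  have hfac : ((n.factorial : ℂ)) ≠ 0 := Nat.cast_ne_zero.mpr n.factorial_ne_zero
  field_simp at this
  simpa using this

theorem stmt2 (lam a b : ℂ) (y : ℕ → ℕ → ℂ)
    (hy : ∀ k : ℕ, ∀ t : ℂ, HasSum (fun n => y n k * t ^ n / n.factorial)
      (Complex.exp (b * k * t) / k.factorial *
        (lam * Complex.exp ((a - b) * t) + 1) ^ k)) :
    ∀ n k : ℕ, y n k =
      (k.factorial : ℂ)⁻¹ * ∑ j ∈ Finset.range (k + 1),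
        (k.choose j : ℂ) * lam ^ j * (b * k + j * (a - b)) ^ n := by
  intro n k
  set z : ℕ → ℂ := fun n =>
    (k.factorial : ℂ)⁻¹ * ∑ j ∈ Finset.range (k + 1),
      (k.choose j : ℂ) * lam ^ j * (b * k + j * (a - b)) ^ n with hz
  -- z has the same exponential generating function
  have hzsum : ∀ t : ℂ, HasSum (fun n => z n * t ^ n / n.factorial)
      (Complex.exp (b * k * t) / k.factorial *
        (lam * Complex.exp ((a - b) * t) + 1) ^ k) := by
    intro t
    have hexp : ∀ j ∈ Finset.range (k + 1),
        HasSum (fun m : ℕ => (k.factorial : ℂ)⁻¹ * ((k.choose j : ℂ) * lam ^ j *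
          (b * k + j * (a - b)) ^ m) * t ^ m / m.factorial)
        ((k.factorial : ℂ)⁻¹ * ((k.choose j : ℂ) * lam ^ j *
          Complex.exp ((b * k + j * (a - b)) * t))) := by
      intro j _
      have h0 := (cexp_hasSum ((b * k + j * (a - b)) * t)).mul_left
        ((k.factorial : ℂ)⁻¹ * ((k.choose j : ℂ) * lam ^ j))
      have hv : (k.factorial : ℂ)⁻¹ * ((k.choose j : ℂ) * lam ^ j) *
          Complex.exp ((b * k + j * (a - b)) * t)
          = (k.factorial : ℂ)⁻¹ * ((k.choose j : ℂ) * lam ^ j *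
            Complex.exp ((b * k + j * (a - b)) * t)) := by ring
      rw [hv] at h0
      refine h0.congr_fun fun m => ?_
      rw [mul_pow]
      ring
    have hsum := hasSum_sum hexp
    have hfun : (fun m : ℕ => ∑ j ∈ Finset.range (k + 1),
        (k.factorial : ℂ)⁻¹ * ((k.choose j : ℂ) * lam ^ j *
          (b * k + j * (a - b)) ^ m) * t ^ m / m.factorial)
        = fun m => z m * t ^ m / m.factorial := by
      funext m
      simp only [hz, Finset.mul_sum, Finset.sum_mul, Finset.sum_div]
    rw [hfun] at hsum
    have hval : (∑ j ∈ Finset.range (k + 1),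
        (k.factorial : ℂ)⁻¹ * ((k.choose j : ℂ) * lam ^ j *
          Complex.exp ((b * k + j * (a - b)) * t)))
        = Complex.exp (b * k * t) / k.factorial *
          (lam * Complex.exp ((a - b) * t) + 1) ^ k := by
      rw [add_pow]
      rw [Finset.mul_sum]
      refine Finset.sum_congr rfl fun j hj => ?_
      rw [mul_pow, ← Complex.exp_nat_mul, one_pow, add_mul, Complex.exp_add]
      ring
    rwa [hval] at hsum
  have key := coeff_zero (fun m => y m k - z m) (fun t => by
    have := (hy k t).sub (hzsum t)
    simp only [sub_self] at this
    refine this.congr_fun fun m => ?_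
    ring)
  exact sub_eq_zero.mp (key n)
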